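/- Every subgroup G of Perm (Fin 5) that acts transitively on Fin 5 is conjugate in Perm (Fin 5) to exactly one of the following five subgroups: the cyclic group C_5 = ⟨(1 2 3 4 5)⟩ of order 5, the dihedral group D_5 = ⟨(1 2 3 4 5), (2 5)(3 4)⟩ of order 10, the affine group Aff(F_5) = ⟨(1 2 3 4 5), (2 3 5 4)⟩ of order 20, the alternating group A_5, or the full symmetric group S_5 = Perm (Fin 5). -/

import Mathlib

open Equiv

set_option maxRecDepth 100000
set_option maxHeartbeats 1000000

/-- The cyclic subgroup `C₅ = ⟨(1 2 3 4 5)⟩` of `Perm (Fin 5)`. -/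
def C5 : Subgroup (Equiv.Perm (Fin 5)) := Subgroup.closure {c[0, 1, 2, 3, 4]}

/-- The dihedral subgroup `D₅ = ⟨(1 2 3 4 5), (2 5)(3 4)⟩` of `Perm (Fin 5)`. -/
def D5 : Subgroup (Equiv.Perm (Fin 5)) :=
  Subgroup.closure {c[0, 1, 2, 3, 4], c[1, 4] * c[2, 3]}

/-- The affine subgroup `Aff(F₅) = ⟨(1 2 3 4 5), (2 3 5 4)⟩` of `Perm (Fin 5)`. -/
def Aff5 : Subgroup (Equiv.Perm (Fin 5)) :=
  Subgroup.closure {c[0, 1, 2, 3, 4], c[1, 2, 4, 3]}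

/-- `H` is conjugate to `K` in `Perm (Fin 5)`: `σ H σ⁻¹ = K` for some `σ`. -/
def SubConj (H K : Subgroup (Equiv.Perm (Fin 5))) : Prop :=
  ∃ σ : Equiv.Perm (Fin 5), Subgroup.map (MulAut.conj σ).toMonoidHom H = K

namespace ClassifyAux

def c0 : Perm (Fin 5) := c[0, 1, 2, 3, 4]
def t0 : Perm (Fin 5) := c[1, 2, 4, 3]
def r0 : Perm (Fin 5) := c[1, 4] * c[2, 3]

def C5f : Finset (Perm (Fin 5)) :=
  Finset.image (fun i : Fin 5 => c0 ^ (i : ℕ)) Finset.univ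

def D10f : Finset (Perm (Fin 5)) :=
  Finset.image (fun p : Fin 5 × Fin 2 => c0 ^ (p.1 : ℕ) * r0 ^ (p.2 : ℕ)) Finset.univ

def A20f : Finset (Perm (Fin 5)) :=
  Finset.image (fun p : Fin 5 × Fin 4 => c0 ^ (p.1 : ℕ) * t0 ^ (p.2 : ℕ)) Finset.univ

lemma hC5f : C5 = Subgroup.closure {c0} := rfl

lemma mem_C5f_iff {x : Perm (Fin 5)} : x ∈ C5f ↔ ∃ i : Fin 5, c0 ^ (i : ℕ) = x := by
  unfold C5f
  simp only [Finset.mem_image, Finset.mem_univ, true_and]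

lemma mem_D10f_iff {x : Perm (Fin 5)} :
    x ∈ D10f ↔ ∃ p : Fin 5 × Fin 2, c0 ^ (p.1 : ℕ) * r0 ^ (p.2 : ℕ) = x := by
  unfold D10f
  simp only [Finset.mem_image, Finset.mem_univ, true_and]

lemma mem_A20f_iff {x : Perm (Fin 5)} :
    x ∈ A20f ↔ ∃ p : Fin 5 × Fin 4, c0 ^ (p.1 : ℕ) * t0 ^ (p.2 : ℕ) = x := by
  unfold A20f
  simp only [Finset.mem_image, Finset.mem_univ, true_and]
lemma hD5f : D5 = Subgroup.closure {c0, r0} := rfl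
lemma hAff5f : Aff5 = Subgroup.closure {c0, t0} := rfl

-- decidable facts
lemma r0_eq : r0 = t0 ^ 2 := by decide
lemma c0_pow : c0 ^ 5 = 1 := by decide
lemma c0_ne : c0 ≠ 1 := by decide
lemma t0_pow : t0 ^ 4 = 1 := by decide

instance fact5 : Fact (Nat.Prime 5) := ⟨by norm_num⟩

lemma orderOf_c0 : orderOf c0 = 5 :=
  orderOf_eq_prime c0_pow c0_ne

lemma C5f_closed : (∀ a ∈ C5f, ∀ b ∈ C5f, a * b ∈ C5f) ∧ (∀ a ∈ C5f, a⁻¹ ∈ C5f) ∧ (1 : Perm (Fin 5)) ∈ C5f := by decide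
lemma D10f_closed : (∀ a ∈ D10f, ∀ b ∈ D10f, a * b ∈ D10f) ∧ (∀ a ∈ D10f, a⁻¹ ∈ D10f) ∧ (1 : Perm (Fin 5)) ∈ D10f := by decide
lemma A20f_closed : (∀ a ∈ A20f, ∀ b ∈ A20f, a * b ∈ A20f) ∧ (∀ a ∈ A20f, a⁻¹ ∈ A20f) ∧ (1 : Perm (Fin 5)) ∈ A20f := by decide

/-- the explicit C5 subgroup -/
def C5s : Subgroup (Perm (Fin 5)) where
  carrier := ↑C5f
  one_mem' := C5f_closed.2.2
  mul_mem' := fun ha hb => C5f_closed.1 _ ha _ hb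
  inv_mem' := fun ha => C5f_closed.2.1 _ ha

lemma mem_C5s {x : Perm (Fin 5)} : x ∈ C5s ↔ x ∈ C5f := Iff.rfl

def D10s : Subgroup (Perm (Fin 5)) where
  carrier := ↑D10f
  one_mem' := D10f_closed.2.2
  mul_mem' := fun ha hb => D10f_closed.1 _ ha _ hb
  inv_mem' := fun ha => D10f_closed.2.1 _ ha

lemma mem_D10s {x : Perm (Fin 5)} : x ∈ D10s ↔ x ∈ D10f := Iff.rfl

def A20s : Subgroup (Perm (Fin 5)) where
  carrier := ↑A20f
  one_mem' := A20f_closed.2.2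
  mul_mem' := fun ha hb => A20f_closed.1 _ ha _ hb
  inv_mem' := fun ha => A20f_closed.2.1 _ ha

lemma mem_A20s {x : Perm (Fin 5)} : x ∈ A20s ↔ x ∈ A20f := Iff.rfl

lemma C5_eq : C5 = C5s := by
  apply le_antisymm
  · rw [hC5f, Subgroup.closure_le]
    intro x hx
    rcases hx with rfl
    exact mem_C5s.mpr (by decide)
  · intro x hx
    obtain ⟨i, rfl⟩ := mem_C5f_iff.mp (mem_C5s.mp hx)
    exact pow_mem (Subgroup.subset_closure (Set.mem_singleton _)) _

lemma D5_eq : D5 = D10s := by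
  apply le_antisymm
  · rw [hD5f, Subgroup.closure_le]
    intro x hx
    rcases hx with rfl | rfl
    · exact mem_D10s.mpr (by decide)
    · exact mem_D10s.mpr (by decide)
  · intro x hx
    obtain ⟨⟨i, j⟩, rfl⟩ := mem_D10f_iff.mp (mem_D10s.mp hx)
    exact mul_mem (pow_mem (Subgroup.subset_closure (Set.mem_insert _ _)) _)
      (pow_mem (Subgroup.subset_closure (Set.mem_insert_of_mem _ (Set.mem_singleton _))) _)

lemma Aff5_eq : Aff5 = A20s := by
  apply le_antisymm
  · rw [hAff5f, Subgroup.closure_le]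
    intro x hx
    rcases hx with rfl | rfl
    · exact mem_A20s.mpr (by decide)
    · exact mem_A20s.mpr (by decide)
  · intro x hx
    obtain ⟨⟨i, j⟩, rfl⟩ := mem_A20f_iff.mp (mem_A20s.mp hx)
    exact mul_mem (pow_mem (Subgroup.subset_closure (Set.mem_insert _ _)) _)
      (pow_mem (Subgroup.subset_closure (Set.mem_insert_of_mem _ (Set.mem_singleton _))) _)

lemma card_C5 : Nat.card C5 = 5 := by
  rw [hC5f, ← Subgroup.zpowers_eq_closure, Nat.card_zpowers, orderOf_c0]

lemma card_D5 : Nat.card D5 = 10 := by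
  rw [D5_eq]
  have h2 : Nat.card D10s = Nat.card {x // x ∈ D10f} :=
    Nat.card_congr (Equiv.subtypeEquivRight fun x => mem_D10s)
  rw [h2, Nat.card_eq_fintype_card, Fintype.card_coe]
  decide

lemma card_Aff5 : Nat.card Aff5 = 20 := by
  rw [Aff5_eq]
  have h2 : Nat.card A20s = Nat.card {x // x ∈ A20f} :=
    Nat.card_congr (Equiv.subtypeEquivRight fun x => mem_A20s)
  rw [h2, Nat.card_eq_fintype_card, Fintype.card_coe]
  decide

lemma card_A5 : Nat.card (alternatingGroup (Fin 5)) = 60 := by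
  have h := two_mul_card_alternatingGroup (α := Fin 5)
  rw [Fintype.card_perm, Fintype.card_fin] at h
  rw [Nat.card_eq_fintype_card]
  have h5 : Nat.factorial 5 = 120 := rfl
  omega

lemma card_top : Nat.card (⊤ : Subgroup (Perm (Fin 5))) = 120 := by
  rw [Subgroup.card_top, Nat.card_eq_fintype_card, Fintype.card_perm, Fintype.card_fin]
  rfl


/-! ### SubConj machinery -/

lemma conj_map_map (σ τ : Perm (Fin 5)) (H : Subgroup (Perm (Fin 5))) :
    Subgroup.map (MulAut.conj σ).toMonoidHom (Subgroup.map (MulAut.conj τ).toMonoidHom H) =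
      Subgroup.map (MulAut.conj (σ * τ)).toMonoidHom H := by
  rw [Subgroup.map_map]
  congr 1

lemma conj_map_one (H : Subgroup (Perm (Fin 5))) :
    Subgroup.map (MulAut.conj (1 : Perm (Fin 5))).toMonoidHom H = H := by
  ext x
  simp [Subgroup.mem_map, MulAut.conj_apply]

lemma subconj_symm {H K : Subgroup (Perm (Fin 5))} : SubConj H K → SubConj K H := by
  rintro ⟨σ, rfl⟩
  exact ⟨σ⁻¹, by rw [conj_map_map, inv_mul_cancel, conj_map_one]⟩

lemma subconj_trans {G H K : Subgroup (Perm (Fin 5))} :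
    SubConj G H → SubConj H K → SubConj G K := by
  rintro ⟨σ, rfl⟩ ⟨τ, rfl⟩
  exact ⟨τ * σ, by rw [conj_map_map]⟩

lemma card_of_subconj {H K : Subgroup (Perm (Fin 5))} (h : SubConj H K) :
    Nat.card H = Nat.card K := by
  obtain ⟨σ, rfl⟩ := h
  exact Nat.card_congr
    (Subgroup.equivMapOfInjective H _ (MulAut.conj σ).injective).toEquiv

/-! ### basic cardinalities -/

lemma cardS5 : Nat.card (Perm (Fin 5)) = 120 := by
  rw [Nat.card_eq_fintype_card, Fintype.card_perm, Fintype.card_fin]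
  rfl

lemma fact120 : (Nat.card (Perm (Fin 5))).factorization 5 = 1 := by
  rw [cardS5, show (120 : ℕ) = 24 * 5 by norm_num,
    Nat.factorization_mul (by norm_num) (by norm_num)]
  have h24 : (24 : ℕ).factorization 5 = 0 :=
    Nat.factorization_eq_zero_of_not_dvd (by norm_num)
  have h5 : (5 : ℕ).factorization 5 = 1 := Nat.Prime.factorization_self (by norm_num)
  rw [Finsupp.add_apply, h24, h5]

lemma zpc0 : Subgroup.zpowers c0 = C5s := by
  rw [Subgroup.zpowers_eq_closure, ← hC5f, C5_eq]

lemma card_zp_c0 : Nat.card (Subgroup.zpowers c0) = 5 := by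
  rw [Nat.card_zpowers, orderOf_c0]

/-! ### normalizer of ⟨c0⟩ -/

lemma norm_imp : ∀ g : Perm (Fin 5), (∀ n ∈ C5f, g * n * g⁻¹ ∈ C5f) → g ∈ A20f := by decide

lemma A20_norm : ∀ g ∈ A20f, ∀ n ∈ C5f, g * n * g⁻¹ ∈ C5f := by decide

lemma normalizer_zpowers : Subgroup.normalizer (Subgroup.zpowers c0 : Set (Perm (Fin 5))) = A20s := by
  ext g
  constructor
  · intro hg
    refine mem_A20s.mpr (norm_imp g ?_)
    intro n hn
    have h1 : n ∈ Subgroup.zpowers c0 := by rw [zpc0]; exact mem_C5s.mpr hn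
    have h2 := (Subgroup.mem_normalizer_iff.mp hg n).mp h1
    rw [zpc0] at h2
    exact mem_C5s.mp h2
  · intro hg
    apply Subgroup.mem_normalizer_fintype
    intro n hn
    rw [SetLike.mem_coe, zpc0] at hn ⊢
    exact mem_C5s.mpr (A20_norm g (mem_A20s.mp hg) n (mem_C5s.mp hn))

lemma card_A20s : Nat.card A20s = 20 := by
  rw [← Aff5_eq]; exact card_Aff5

lemma card_sylows : Nat.card (Sylow 5 (Perm (Fin 5))) = 6 := by
  have hcd : Nat.card (Subgroup.zpowers c0) =
      5 ^ (Nat.card (Perm (Fin 5))).factorization 5 := by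
    rw [card_zp_c0, fact120, pow_one]
  rw [Sylow.card_eq_index_normalizer (Sylow.ofCard _ hcd)]
  have hco : ((Sylow.ofCard (Subgroup.zpowers c0) hcd : Sylow 5 (Perm (Fin 5))) :
      Subgroup (Perm (Fin 5))) = Subgroup.zpowers c0 := Sylow.coe_ofCard _ _
  rw [show ((Sylow.ofCard (Subgroup.zpowers c0) hcd : Sylow 5 (Perm (Fin 5))) : Set (Perm (Fin 5))) =
      (Subgroup.zpowers c0 : Set (Perm (Fin 5))) from congrArg (fun S : Subgroup (Perm (Fin 5)) => (S : Set (Perm (Fin 5)))) hco,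
    normalizer_zpowers]
  have hmul := Subgroup.card_mul_index A20s
  rw [card_A20s, cardS5] at hmul
  omega

/-! ### Sylow embedding -/

lemma sylow_embed (K : Subgroup (Perm (Fin 5))) (h5 : (Nat.card ↥K).factorization 5 = 1) :
    ∃ f : Sylow 5 ↥K → Sylow 5 (Perm (Fin 5)), Function.Injective f ∧
      ∀ P : Sylow 5 ↥K, (f P : Subgroup (Perm (Fin 5))) = Subgroup.map K.subtype ↑P := by
  have hcard : ∀ P : Sylow 5 ↥K,
      Nat.card (Subgroup.map K.subtype (P : Subgroup ↥K)) =
        5 ^ (Nat.card (Perm (Fin 5))).factorization 5 := by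
    intro P
    rw [fact120, pow_one]
    have h1 : Nat.card (Subgroup.map K.subtype (P : Subgroup ↥K)) = Nat.card P :=
      (Nat.card_congr
        (Subgroup.equivMapOfInjective (P : Subgroup ↥K) K.subtype
          K.subtype_injective).toEquiv).symm
    rw [h1, P.card_eq_multiplicity, h5, pow_one]
  refine ⟨fun P => Sylow.ofCard _ (hcard P), ?_, fun P => Sylow.coe_ofCard _ _⟩
  intro P Q h
  apply Sylow.ext
  apply Subgroup.map_injective K.subtype_injective
  have := congrArg (fun S : Sylow 5 (Perm (Fin 5)) => (S : Subgroup (Perm (Fin 5)))) h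
  simpa [Sylow.coe_ofCard] using this

/-! ### elements of order 5, 3-cycles -/

def s1 : Perm (Fin 5) := c[0, 2, 3, 4, 1]
def s2 : Perm (Fin 5) := c[0, 4, 3, 2, 1]
def tau0 : Perm (Fin 5) := c[0, 1, 2]

lemma s1s2 : s1 * s2 = tau0 := by decide
lemma s1_pow : s1 ^ 5 = 1 := by decide
lemma s1_ne : s1 ≠ 1 := by decide
lemma s2_pow : s2 ^ 5 = 1 := by decide
lemma s2_ne : s2 ≠ 1 := by decide

lemma orderOf_conj5 (π s : Perm (Fin 5)) (h5 : s ^ 5 = 1) (hne : s ≠ 1) :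
    orderOf (π * s * π⁻¹) = 5 := by
  have hc : π * s * π⁻¹ = (MulAut.conj π) s := rfl
  rw [hc, MulEquiv.orderOf_eq]
  exact orderOf_eq_prime h5 hne

lemma tau0_threeCycle : Equiv.Perm.IsThreeCycle tau0 :=
  card_support_eq_three_iff.mp (by decide)

/-! ### the key classification -/

theorem key (K : Subgroup (Perm (Fin 5))) (hc : c0 ∈ K) :
    K = C5 ∨ K = D5 ∨ K = Aff5 ∨ K = alternatingGroup (Fin 5) ∨ K = ⊤ := by
  by_cases hA : K ≤ A20s
  · -- K is one of C5, D5, Aff5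
    by_cases ht : t0 ∈ K
    · refine Or.inr (Or.inr (Or.inl ?_))
      apply le_antisymm
      · rw [Aff5_eq]; exact hA
      · rw [hAff5f, Subgroup.closure_le]
        rintro x (rfl | rfl)
        exacts [hc, ht]
    · have htj : ∀ (i : Fin 5) (j : Fin 4), c0 ^ (i : ℕ) * t0 ^ (j : ℕ) ∈ K →
          t0 ^ (j : ℕ) ∈ K := by
        intro i j hx
        have h := mul_mem (inv_mem (pow_mem hc (i : ℕ))) hx
        rwa [inv_mul_cancel_left] at h
      by_cases ht2 : t0 ^ 2 ∈ K
      · refine Or.inr (Or.inl ?_)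
        apply le_antisymm
        · intro x hx
          obtain ⟨⟨i, j⟩, rfl⟩ := mem_A20f_iff.mp (mem_A20s.mp (hA hx))
          have hj := htj i j hx
          have hcD : c0 ∈ D5 := by
            rw [hD5f]; exact Subgroup.subset_closure (Set.mem_insert _ _)
          have hrD : r0 ∈ D5 := by
            rw [hD5f]
            exact Subgroup.subset_closure (Set.mem_insert_of_mem _ (Set.mem_singleton _))
          fin_cases j
          · simpa using pow_mem hcD (i : ℕ)
          · exact absurd (by simpa using hj) ht
          · have : c0 ^ (i : ℕ) * t0 ^ 2 = c0 ^ (i : ℕ) * r0 := by rw [r0_eq]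
            simpa [this] using mul_mem (pow_mem hcD (i : ℕ)) hrD
          · exfalso
            apply ht
            have h9 : (t0 ^ 3) ^ 3 = t0 := by decide
            have := pow_mem (by simpa using hj : t0 ^ 3 ∈ K) 3
            rwa [h9] at this
        · rw [hD5f, Subgroup.closure_le]
          rintro x (rfl | rfl)
          · exact hc
          · rw [r0_eq]; exact ht2
      · refine Or.inl ?_
        apply le_antisymm
        · intro x hx
          obtain ⟨⟨i, j⟩, rfl⟩ := mem_A20f_iff.mp (mem_A20s.mp (hA hx))
          have hj := htj i j hx
          have hcC : c0 ∈ C5 := by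
            rw [hC5f]; exact Subgroup.subset_closure (Set.mem_singleton _)
          fin_cases j
          · simpa using pow_mem hcC (i : ℕ)
          · exact absurd (by simpa using hj) ht
          · exact absurd (by simpa using hj) ht2
          · exfalso
            apply ht
            have h9 : (t0 ^ 3) ^ 3 = t0 := by decide
            have := pow_mem (by simpa using hj : t0 ^ 3 ∈ K) 3
            rwa [h9] at this
        · rw [hC5f, Subgroup.closure_le]
          rintro x rfl
          exact hc
  · -- hard case: K contains A5
    obtain ⟨g₀, hg₀K, hg₀A⟩ := SetLike.not_le_iff_exists.mp hA
    have hKle : Subgroup.zpowers c0 ≤ K := (Subgroup.zpowers_le).mpr hc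
    have hKne : Nat.card ↥K ≠ 0 := Nat.card_pos.ne'
    have h5 : (Nat.card ↥K).factorization 5 = 1 := by
      have hd1 : (5 : ℕ) ∣ Nat.card K := by
        have := Subgroup.card_dvd_of_le hKle
        rwa [card_zp_c0] at this
      have hd2 : Nat.card K ∣ 120 := by
        have := Subgroup.card_subgroup_dvd_card K
        rwa [cardS5] at this
      have h1 : 1 ≤ (Nat.card ↥K).factorization 5 :=
        (Nat.Prime.factorization_pos_of_dvd (by norm_num) hKne hd1)
      have h2 : (Nat.card ↥K).factorization 5 ≤ (120 : ℕ).factorization 5 :=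
        (Nat.factorization_le_iff_dvd hKne (by norm_num)).mpr hd2 5
      have h3 : (120 : ℕ).factorization 5 = 1 := by
        rw [← cardS5]; exact fact120
      omega
    obtain ⟨f, finj, fcoe⟩ := sylow_embed K h5
    -- the canonical Sylow subgroup of K
    have hP0card : Nat.card ((Subgroup.zpowers c0).subgroupOf K) =
        5 ^ (Nat.card ↥K).factorization 5 := by
      rw [h5, pow_one,
        Nat.card_congr (Subgroup.subgroupOfEquivOfLe hKle).toEquiv, card_zp_c0]
    set P₀ : Sylow 5 ↥K := Sylow.ofCard _ hP0card with hP₀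
    -- the number of Sylow 5-subgroups of K is 6
    have hne1 : Nat.card (Sylow 5 ↥K) ≠ 1 := by
      intro hone
      have hsub : Subsingleton (Sylow 5 ↥K) := Nat.card_eq_one_iff_unique.mp hone |>.1
      apply hg₀A
      refine mem_A20s.mpr (norm_imp g₀ ?_)
      intro n hn
      have hnz : n ∈ Subgroup.zpowers c0 := by rw [zpc0]; exact mem_C5s.mpr hn
      have hnK : n ∈ K := hKle hnz
      set a : ↥K := ⟨g₀, hg₀K⟩ with ha
      set m : ↥K := ⟨n, hnK⟩ with hm
      have hmem : m ∈ (P₀ : Subgroup ↥K) := by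
        show m ∈ (Subgroup.zpowers c0).subgroupOf K
        rwa [Subgroup.mem_subgroupOf]
      have hsmul : a • P₀ = P₀ := Subsingleton.elim _ _
      have hnorm := Sylow.smul_eq_iff_mem_normalizer.mp hsmul
      have h2 := (Subgroup.mem_normalizer_iff.mp hnorm m).mp hmem
      have h2' : a * m * a⁻¹ ∈ (Subgroup.zpowers c0).subgroupOf K := h2
      rw [Subgroup.mem_subgroupOf] at h2'
      have h3 : ((a * m * a⁻¹ : ↥K) : Perm (Fin 5)) = g₀ * n * g₀⁻¹ := rfl
      rw [h3, zpc0] at h2'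
      exact mem_C5s.mp h2'
    have hle6 : Nat.card (Sylow 5 ↥K) ≤ 6 := by
      rw [← card_sylows]
      exact Nat.card_le_card_of_injective f finj
    have hmod := card_sylow_modEq_one 5 ↥K
    have hcard6 : Nat.card (Sylow 5 ↥K) = 6 := by
      have hpos : 0 < Nat.card (Sylow 5 ↥K) := Nat.card_pos
      unfold Nat.ModEq at hmod
      omega
    have fbij : Function.Bijective f :=
      (Nat.bijective_iff_injective_and_card f).mpr ⟨finj, by rw [hcard6, card_sylows]⟩
    have horder5 : ∀ h : Perm (Fin 5), orderOf h = 5 → h ∈ K := by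
      intro h hOrd
      have hQcard : Nat.card (Subgroup.zpowers h) =
          5 ^ (Nat.card (Perm (Fin 5))).factorization 5 := by
        rw [Nat.card_zpowers, hOrd, fact120, pow_one]
      obtain ⟨P, hP⟩ := fbij.2 (Sylow.ofCard _ hQcard)
      have hco := congrArg (fun S : Sylow 5 (Perm (Fin 5)) => (S : Subgroup (Perm (Fin 5)))) hP
      simp only [Sylow.coe_ofCard] at hco
      rw [fcoe] at hco
      have : h ∈ Subgroup.map K.subtype ↑P := by
        rw [hco]; exact Subgroup.mem_zpowers h
      exact (Subgroup.map_subtype_le ↑P) this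
    have h3cyc : ∀ τ : Perm (Fin 5), Equiv.Perm.IsThreeCycle τ → τ ∈ K := by
      intro τ hτ
      have hconj : IsConj tau0 τ :=
        Equiv.Perm.isConj_iff_cycleType_eq.mpr (by rw [tau0_threeCycle, hτ])
      obtain ⟨π, hπ⟩ := isConj_iff.mp hconj
      have hτeq : τ = π * tau0 * π⁻¹ := hπ.symm
      have hsplit : τ = (π * s1 * π⁻¹) * (π * s2 * π⁻¹) := by
        rw [hτeq, ← s1s2]; group
      rw [hsplit]
      exact mul_mem (horder5 _ (orderOf_conj5 π s1 s1_pow s1_ne))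
        (horder5 _ (orderOf_conj5 π s2 s2_pow s2_ne))
    have hA5le : alternatingGroup (Fin 5) ≤ K := by
      rw [← Equiv.Perm.closure_three_cycles_eq_alternating]
      exact (Subgroup.closure_le _).mpr fun σ hσ => h3cyc σ hσ
    by_cases hKA : K ≤ alternatingGroup (Fin 5)
    · exact Or.inr (Or.inr (Or.inr (Or.inl (le_antisymm hKA hA5le))))
    · refine Or.inr (Or.inr (Or.inr (Or.inr ?_)))
      obtain ⟨w, hwK, hwA⟩ := SetLike.not_le_iff_exists.mp hKA
      have hsw : Equiv.Perm.sign w = -1 := by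
        rcases Int.units_eq_one_or (Equiv.Perm.sign w) with h | h
        · exact absurd (Equiv.Perm.mem_alternatingGroup.mpr h) hwA
        · exact h
      rw [eq_top_iff]
      intro h _
      rcases Int.units_eq_one_or (Equiv.Perm.sign h) with hsh | hsh
      · exact hA5le (Equiv.Perm.mem_alternatingGroup.mpr hsh)
      · have hmemA : h * w⁻¹ ∈ alternatingGroup (Fin 5) := by
          rw [Equiv.Perm.mem_alternatingGroup, map_mul, map_inv, hsh, hsw]
          rfl
        have := mul_mem (hA5le hmemA) hwK
        rwa [inv_mul_cancel_right] at this


lemma final_of (G X : Subgroup (Perm (Fin 5)))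
    (hX : X ∈ ({C5, D5, Aff5, alternatingGroup (Fin 5), ⊤} :
      Set (Subgroup (Equiv.Perm (Fin 5)))))
    (h : SubConj G X) :
    ∃! H : Subgroup (Equiv.Perm (Fin 5)),
      H ∈ ({C5, D5, Aff5, alternatingGroup (Fin 5), ⊤} :
        Set (Subgroup (Equiv.Perm (Fin 5)))) ∧ SubConj G H := by
  refine ⟨X, ⟨hX, h⟩, ?_⟩
  rintro Y ⟨hY, hGY⟩
  have hcard := card_of_subconj (subconj_trans (subconj_symm h) hGY)
  simp only [Set.mem_insert_iff, Set.mem_singleton_iff] at hX hY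
  have c1 := card_C5
  have c2 := card_D5
  have c3 := card_Aff5
  have c4 := card_A5
  have c5 := card_top
  rcases hX with rfl | rfl | rfl | rfl | rfl <;> rcases hY with rfl | rfl | rfl | rfl | rfl <;>
    first
      | rfl
      | (exfalso; rw [c1] at hcard <;> rw [c2] at hcard <;> omega)
      | (exfalso; omega)
      | (exfalso; simp_all)

end ClassifyAux

open ClassifyAux in
/-- Every transitive subgroup of `Perm (Fin 5)` is conjugate to exactly one of:
`C₅`, `D₅`, `Aff(F₅)`, the alternating group `A₅`, or the full symmetric group. -/
theorem transitive_subgroup_of_perm_fin_five_classification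
    (G : Subgroup (Equiv.Perm (Fin 5)))
    (htrans : ∀ x y : Fin 5, ∃ g ∈ G, g x = y) :
    ∃! H : Subgroup (Equiv.Perm (Fin 5)),
      H ∈ ({C5, D5, Aff5, alternatingGroup (Fin 5), ⊤} :
        Set (Subgroup (Equiv.Perm (Fin 5)))) ∧ SubConj G H := by
  classical
  have h5G : (5 : ℕ) ∣ Nat.card ↥G := by
    have htr : MulAction.IsPretransitive ↥G (Fin 5) := by
      constructor
      intro x y
      obtain ⟨g, hg, hgx⟩ := htrans x y
      exact ⟨⟨g, hg⟩, hgx⟩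
    have hidx := MulAction.index_stabilizer_of_transitive ↥G (0 : Fin 5)
    have hc5 : Nat.card (Fin 5) = 5 := by simp
    rw [hc5] at hidx
    have hdvd := Subgroup.index_dvd_card (MulAction.stabilizer ↥G (0 : Fin 5))
    rwa [hidx] at hdvd
  letI : Fintype ↥G := Fintype.ofFinite ↥G
  obtain ⟨g, hg⟩ := exists_prime_orderOf_dvd_card (G := ↥G) 5
    (by rwa [← Nat.card_eq_fintype_card])
  have hOrd : orderOf (↑g : Perm (Fin 5)) = 5 := by
    have h2 := orderOf_injective G.subtype G.subtype_injective g
    exact h2.trans hg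
  have hcd1 : Nat.card (Subgroup.zpowers (↑g : Perm (Fin 5))) =
      5 ^ (Nat.card (Perm (Fin 5))).factorization 5 := by
    rw [Nat.card_zpowers, hOrd, fact120, pow_one]
  have hcd2 : Nat.card (Subgroup.zpowers c0) =
      5 ^ (Nat.card (Perm (Fin 5))).factorization 5 := by
    rw [card_zp_c0, fact120, pow_one]
  obtain ⟨σ, hσ⟩ := MulAction.exists_smul_eq (Perm (Fin 5))
    (Sylow.ofCard _ hcd1) (Sylow.ofCard _ hcd2)
  have hco := congrArg
    (fun S : Sylow 5 (Perm (Fin 5)) => (S : Subgroup (Perm (Fin 5)))) hσ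
  simp only [Sylow.coe_subgroup_smul, Sylow.coe_ofCard] at hco
  have hmapeq : Subgroup.map (MulAut.conj σ).toMonoidHom
      (Subgroup.zpowers (↑g : Perm (Fin 5))) = Subgroup.zpowers c0 := by
    rw [← hco, Subgroup.pointwise_smul_def]
    rfl
  have hcG1 : c0 ∈ Subgroup.map (MulAut.conj σ).toMonoidHom G := by
    have hle : Subgroup.zpowers (↑g : Perm (Fin 5)) ≤ G := Subgroup.zpowers_le.mpr g.2
    exact Subgroup.map_mono hle (hmapeq ▸ Subgroup.mem_zpowers c0)
  have hsc : SubConj G (Subgroup.map (MulAut.conj σ).toMonoidHom G) := ⟨σ, rfl⟩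
  rcases key _ hcG1 with h | h | h | h | h
  · exact final_of G C5 (by left; rfl) (h ▸ hsc)
  · exact final_of G D5 (by right; left; rfl) (h ▸ hsc)
  · exact final_of G Aff5 (by right; right; left; rfl) (h ▸ hsc)
  · exact final_of G (alternatingGroup (Fin 5)) (by right; right; right; left; rfl) (h ▸ hsc)
  · exact final_of G ⊤ (by right; right; right; right; rfl) (h ▸ hsc)
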